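/- Let C be a compact convex metrizable subset of a locally convex space, F ⊆ C a closed face, and ν a Borel probability measure on C whose barycenter lies in F. Then ν(C \ F) = 0. -/

import Mathlib

open MeasureTheory

set_option linter.unusedSectionVars false

section BauerAux

open Set Topology SeparationQuotient


variable {E : Type*} [AddCommGroup E] [Module ℝ E] [TopologicalSpace E]
    [IsTopologicalAddGroup E] [ContinuousSMul ℝ E]

theorem my_isCompact_convexJoin {s t : Set E} (hs : IsCompact s) (ht : IsCompact t) :
    IsCompact (convexJoin ℝ s t) := by
  have : convexJoin ℝ s t =
      (fun p : (ℝ × E) × E => (1 - p.1.1) • p.1.2 + p.1.1 • p.2) ''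
        ((Icc (0:ℝ) 1 ×ˢ s) ×ˢ t) := by
    ext x
    simp only [mem_convexJoin, Set.mem_image, Set.mem_prod, segment_eq_image]
    constructor
    · rintro ⟨a, ha, b, hb, θ, hθ, rfl⟩
      exact ⟨((θ, a), b), ⟨⟨hθ, ha⟩, hb⟩, rfl⟩
    · rintro ⟨⟨⟨θ, a⟩, b⟩, ⟨⟨hθ, ha⟩, hb⟩, rfl⟩
      exact ⟨a, ha, b, hb, θ, hθ, rfl⟩
  rw [this]
  refine (((isCompact_Icc.prod hs).prod ht)).image ?_
  apply Continuous.add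
  · exact (continuous_const.sub (continuous_fst.comp continuous_fst)).smul
      (continuous_snd.comp continuous_fst)
  · exact (continuous_fst.comp continuous_fst).smul continuous_snd

theorem my_isCompact_convexHull_biUnion {ι : Type*} (S : Finset ι) (A : ι → Set E)
    (h : ∀ i ∈ S, IsCompact (A i) ∧ Convex ℝ (A i)) :
    IsCompact (convexHull ℝ (⋃ i ∈ S, A i)) := by
  classical
  induction S using Finset.induction with
  | empty => simp
  | @insert a S ha IH =>
    have hrest : IsCompact (convexHull ℝ (⋃ i ∈ S, A i)) :=
      IH fun i hi => h i (Finset.mem_insert_of_mem hi)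
    have hAa := h a (Finset.mem_insert_self a S)
    rw [Finset.set_biUnion_insert]
    rcases (A a).eq_empty_or_nonempty with hAe | hAne
    · rw [hAe, Set.empty_union]; exact hrest
    rcases (⋃ i ∈ S, A i).eq_empty_or_nonempty with hUe | hUne
    · rw [hUe, Set.union_empty, hAa.2.convexHull_eq]; exact hAa.1
    · rw [convexHull_union hAne hUne, hAa.2.convexHull_eq]
      exact my_isCompact_convexJoin hAa.1 hrest

theorem my_extreme_mem_biUnion {ι : Type*} {D : Set E} (hD : Convex ℝ D) {e : E}
    (he : e ∈ D.extremePoints ℝ) (S : Finset ι) (A : ι → Set E)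
    (hconv : ∀ i ∈ S, Convex ℝ (A i)) (hsub : ∀ i ∈ S, A i ⊆ D)
    (hmem : e ∈ convexHull ℝ (⋃ i ∈ S, A i)) : ∃ i ∈ S, e ∈ A i := by
  classical
  induction S using Finset.induction with
  | empty => simp at hmem
  | @insert a S ha IH =>
    rw [Finset.set_biUnion_insert] at hmem
    have hUD : convexHull ℝ (⋃ i ∈ S, A i) ⊆ D :=
      convexHull_min (Set.iUnion₂_subset fun i hi => hsub i (Finset.mem_insert_of_mem hi)) hD
    have IH' : e ∈ convexHull ℝ (⋃ i ∈ S, A i) → ∃ i ∈ S, e ∈ A i := fun h' =>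
      IH (fun i hi => hconv i (Finset.mem_insert_of_mem hi))
        (fun i hi => hsub i (Finset.mem_insert_of_mem hi)) h'
    rcases (A a).eq_empty_or_nonempty with hAe | hAne
    · rw [hAe, Set.empty_union] at hmem
      obtain ⟨i, hi, h⟩ := IH' hmem
      exact ⟨i, Finset.mem_insert_of_mem hi, h⟩
    rcases (⋃ i ∈ S, A i).eq_empty_or_nonempty with hUe | hUne
    · rw [hUe, Set.union_empty, (hconv a (Finset.mem_insert_self a S)).convexHull_eq] at hmem
      exact ⟨a, Finset.mem_insert_self a S, hmem⟩
    rw [convexHull_union hAne hUne,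
      (hconv a (Finset.mem_insert_self a S)).convexHull_eq, mem_convexJoin] at hmem
    obtain ⟨x, hx, y, hy, hseg⟩ := hmem
    rw [segment_eq_image] at hseg
    obtain ⟨θ, hθ, hxy⟩ := hseg
    rcases eq_or_lt_of_le hθ.1 with h0 | h0
    · rw [← h0] at hxy; simp at hxy
      subst hxy; exact ⟨a, Finset.mem_insert_self a S, hx⟩
    rcases eq_or_lt_of_le hθ.2 with h1 | h1
    · rw [h1] at hxy; simp at hxy
      subst hxy
      obtain ⟨i, hi, h⟩ := IH' hy
      exact ⟨i, Finset.mem_insert_of_mem hi, h⟩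
    · have : e ∈ openSegment ℝ x y := by
        rw [openSegment_eq_image]
        exact ⟨θ, ⟨h0, h1⟩, hxy⟩
      obtain ⟨hx', _⟩ := (mem_extremePoints.1 he).2 x (hsub a (Finset.mem_insert_self a S) hx) y (hUD hy) this
      rw [hx'] at hx
      exact ⟨a, Finset.mem_insert_self a S, hx⟩

theorem my_milman [T2Space E] [LocallyConvexSpace ℝ E] {K : Set E} (hK : IsCompact K)
    (hD : IsCompact (closure (convexHull ℝ K))) {e : E}
    (he : e ∈ (closure (convexHull ℝ K)).extremePoints ℝ) : e ∈ K := by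
  classical
  by_contra heK
  set D := closure (convexHull ℝ K) with hDdef
  have hDconv : Convex ℝ D := (convex_convexHull ℝ K).closure
  have key : ∀ k : E, ∃ W : Set E, IsOpen W ∧ Convex ℝ W ∧ (k ∈ K → k ∈ W) ∧ e ∉ closure W := by
    intro k
    by_cases hk : k ∈ K
    · have hek : e ≠ k := fun h => heK (h ▸ hk)
      obtain ⟨A, B, hA, hB, heA, hkB, hAB⟩ := t2_separation hek
      obtain ⟨t, htk, htcl, htB⟩ := exists_mem_nhds_isClosed_subset (hB.mem_nhds hkB)
      obtain ⟨S, ⟨hSk, hSconv⟩, hSt⟩ :=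
        ((locallyConvexSpace_iff ℝ E).1 inferInstance k).mem_iff.1 htk
      refine ⟨interior S, isOpen_interior, hSconv.interior,
        fun _ => mem_interior_iff_mem_nhds.2 hSk, ?_⟩
      intro hecl
      have het : e ∈ t := htcl.closure_subset_iff.2 (interior_subset.trans hSt) hecl
      exact Set.notMem_empty e ((Set.disjoint_iff.1 hAB) ⟨heA, htB het⟩)
    · exact ⟨∅, isOpen_empty, convex_empty, fun h => absurd h hk, by simp⟩
  choose W hWopen hWconv hWmem hWe using key
  obtain ⟨T, hcover⟩ := hK.elim_finite_subcover W hWopen (fun x hx => Set.mem_iUnion.2 ⟨x, hWmem x hx⟩)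
  set A : E → Set E := fun k => closure (convexHull ℝ (K ∩ closure (W k))) with hA
  have hAconv : ∀ k, Convex ℝ (A k) := fun k => (convex_convexHull ℝ _).closure
  have hAsubD : ∀ k, A k ⊆ D := fun k =>
    closure_mono (convexHull_mono Set.inter_subset_left)
  have hAcomp : ∀ k, IsCompact (A k) := fun k =>
    hD.of_isClosed_subset isClosed_closure (hAsubD k)
  have hAsubW : ∀ k, A k ⊆ closure (W k) := by
    intro k
    have h1 : convexHull ℝ (K ∩ closure (W k)) ⊆ closure (W k) :=
      convexHull_min Set.inter_subset_right (hWconv k).closure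
    simpa [closure_closure] using closure_mono h1
  have hKsub : K ⊆ ⋃ k ∈ T, A k := by
    intro x hx
    obtain ⟨k, hkT, hxk⟩ := Set.mem_iUnion₂.1 (hcover hx)
    exact Set.mem_biUnion hkT (subset_closure (subset_convexHull ℝ _ ⟨hx, subset_closure hxk⟩))
  have hJcomp : IsCompact (convexHull ℝ (⋃ k ∈ T, A k)) :=
    my_isCompact_convexHull_biUnion T A fun k _ => ⟨hAcomp k, hAconv k⟩
  have heJ : e ∈ convexHull ℝ (⋃ k ∈ T, A k) := by
    have h1 : convexHull ℝ K ⊆ convexHull ℝ (⋃ k ∈ T, A k) :=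
      convexHull_min (hKsub.trans (subset_convexHull ℝ _)) (convex_convexHull ℝ _)
    exact closure_minimal h1 hJcomp.isClosed he.1
  obtain ⟨k, _, hek⟩ := my_extreme_mem_biUnion hDconv he T A (fun k _ => hAconv k)
    (fun k _ => hAsubD k) heJ
  exact hWe k (hAsubW k hek)

open Set MeasureTheory

theorem my_integrable {X G : Type*} [TopologicalSpace X] [MeasurableSpace X]
    [OpensMeasurableSpace X] [NormedAddCommGroup G] [SecondCountableTopology G]
    [MeasurableSpace G] [BorelSpace G]
    (μ : Measure X) [IsFiniteMeasure μ] {K : Set X} (hK : IsCompact K) (hμK : μ Kᶜ = 0)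
    {g : X → G} (hg : Continuous g) : Integrable g μ := by
  obtain ⟨M, hM⟩ := hK.exists_bound_of_continuousOn hg.continuousOn
  have hae : ∀ᵐ x ∂μ, x ∈ K := by
    rw [ae_iff]
    exact measure_mono_null (fun x hx => hx) hμK
  refine Integrable.mono' (integrable_const M) hg.aestronglyMeasurable ?_
  filter_upwards [hae] with x hx using hM x hx

theorem exists_barycenter {E : Type*} [AddCommGroup E] [Module ℝ E] [TopologicalSpace E]
    [IsTopologicalAddGroup E] [ContinuousSMul ℝ E]
    [MeasurableSpace E] [OpensMeasurableSpace E]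
    (μ : Measure E) [IsProbabilityMeasure μ] {K D : Set E} (hK : IsCompact K) (hKD : K ⊆ D)
    (hDcomp : IsCompact D) (hDclosed : IsClosed D) (hDconv : Convex ℝ D) (hμK : μ Kᶜ = 0) :
    ∃ x ∈ D, ∀ f : E →L[ℝ] ℝ, f x = ∫ y, f y ∂μ := by
  classical
  set S : Finset (E →L[ℝ] ℝ) → Set E :=
    fun I => {x ∈ D | ∀ f ∈ I, f x = ∫ y, f y ∂μ} with hS
  have hSclosed : ∀ I, IsClosed (S I) := by
    intro I
    have : S I = D ∩ ⋂ f ∈ I, {x | f x = ∫ y, f y ∂μ} := by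
      ext x; simp [hS]
    rw [this]
    exact hDclosed.inter (isClosed_biInter fun f _ => isClosed_eq f.continuous continuous_const)
  have hScomp : ∀ I, IsCompact (S I) := fun I =>
    hDcomp.of_isClosed_subset (hSclosed I) (sep_subset _ _)
  have hSne : ∀ I, (S I).Nonempty := by
    intro I
    set T : E →L[ℝ] (↥I → ℝ) :=
      ContinuousLinearMap.pi (fun f : ↥I => (f : E →L[ℝ] ℝ)) with hT
    have hTD : IsCompact (T '' D) := hDcomp.image T.continuous
    have hTDconv : Convex ℝ (T '' D) := hDconv.linear_image T.toLinearMap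
    set v : ↥I → ℝ := fun f => ∫ y, (f : E →L[ℝ] ℝ) y ∂μ with hv
    have hTint : Integrable (fun y => T y) μ := my_integrable μ hK hμK T.continuous
    have hvw : v = ∫ y, T y ∂μ := by
      funext f
      have := (ContinuousLinearMap.proj (R := ℝ) (φ := fun _ : ↥I => ℝ) f).integral_comp_comm hTint
      simpa [hv, hT, ContinuousLinearMap.pi_apply] using this
    by_cases hvTD : v ∈ T '' D
    · obtain ⟨x, hxD, hTx⟩ := hvTD
      refine ⟨x, hxD, fun f hf => ?_⟩
      have := congrFun hTx (⟨f, hf⟩ : ↥I)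
      simpa [hT, hv] using this
    · exfalso
      obtain ⟨ℓ, u, hu, huv⟩ :=
        geometric_hahn_banach_closed_point hTDconv hTD.isClosed hvTD
      set g : E →L[ℝ] ℝ := ℓ.comp T with hg
      have hgint : Integrable (fun y => g y) μ := my_integrable μ hK hμK g.continuous
      have h1 : ℓ v = ∫ y, g y ∂μ := by
        rw [hvw, ← ℓ.integral_comp_comm hTint]
        rfl
      have h2 : ∫ y, g y ∂μ ≤ u := by
        have hae : ∀ᵐ y ∂μ, g y ≤ u := by
          have haeK : ∀ᵐ y ∂μ, y ∈ K := by
            rw [ae_iff]; exact measure_mono_null (fun x hx => hx) hμK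
          filter_upwards [haeK] with y hy
          exact le_of_lt (hu (T y) (mem_image_of_mem T (hKD hy)))
        calc ∫ y, g y ∂μ ≤ ∫ _, u ∂μ := integral_mono_ae hgint (integrable_const u) hae
        _ = u := by simp
      linarith [h1 ▸ h2, huv]
  have hdir : Directed (· ⊇ ·) S := by
    intro I J
    refine ⟨I ∪ J, fun x hx => ⟨hx.1, fun f hf => hx.2 f (Finset.mem_union_left _ hf)⟩,
      fun x hx => ⟨hx.1, fun f hf => hx.2 f (Finset.mem_union_right _ hf)⟩⟩
  obtain ⟨x, hx⟩ := IsCompact.nonempty_iInter_of_directed_nonempty_isCompact_isClosed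
    S hdir hSne hScomp hSclosed
  have hx' : ∀ I, x ∈ S I := by
    intro I; exact mem_iInter.1 hx I
  exact ⟨x, (hx' ∅).1, fun f => (hx' {f}).2 f (Finset.mem_singleton_self f)⟩

open Set MeasureTheory Topology SeparationQuotient

variable {E : Type*} [AddCommGroup E] [Module ℝ E] [TopologicalSpace E]
    [IsTopologicalAddGroup E] [ContinuousSMul ℝ E] [LocallyConvexSpace ℝ E]

theorem my_locallyConvex_quotient : LocallyConvexSpace ℝ (SeparationQuotient E) := by
  haveI : IsTopologicalAddGroup (SeparationQuotient E) := .mk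
  refine LocallyConvexSpace.ofBasisZero ℝ (SeparationQuotient E)
    (fun s : Set E => mk '' s)
    (fun s => s ∈ 𝓝 (0 : E) ∧ Convex ℝ s) ⟨fun t => ⟨?_, ?_⟩⟩ ?_
  · intro ht
    have h0 : mk (0 : E) = (0 : SeparationQuotient E) := rfl
    have hpre : mk ⁻¹' t ∈ 𝓝 (0 : E) :=
      (SeparationQuotient.continuous_mk.continuousAt (x := (0:E))).preimage_mem_nhds (h0 ▸ ht)
    obtain ⟨s, ⟨hs, hsconv⟩, hst⟩ :=
      ((locallyConvexSpace_iff ℝ E).1 inferInstance 0).mem_iff.1 hpre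
    refine ⟨s, ⟨hs, hsconv⟩, ?_⟩
    rintro y ⟨x, hx, rfl⟩
    exact hst hx
  · rintro ⟨s, ⟨hs, hsconv⟩, hst⟩
    have hopen : IsOpen (mk '' interior s) := isOpenMap_mk _ isOpen_interior
    have h0mem : (0 : SeparationQuotient E) ∈ mk '' interior s :=
      ⟨0, mem_interior_iff_mem_nhds.2 hs, rfl⟩
    exact Filter.mem_of_superset (hopen.mem_nhds h0mem)
      ((Set.image_mono interior_subset).trans hst)
  · rintro s ⟨hs, hsconv⟩
    exact hsconv.is_linear_image ⟨fun x y => rfl, fun c x => rfl⟩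

theorem my_eq_of_forall_dual (x y : SeparationQuotient E)
    (h : ∀ f : SeparationQuotient E →L[ℝ] ℝ, f x = f y) : x = y := by
  haveI : IsTopologicalAddGroup (SeparationQuotient E) := .mk
  haveI := my_locallyConvex_quotient (E := E)
  by_contra hxy
  obtain ⟨f, hf⟩ := geometric_hahn_banach_point_point hxy
  exact absurd (h f) (ne_of_lt hf)

end BauerAux

open Set Topology SeparationQuotient

/-- Bauer's theorem: if the barycenter of a Borel probability measure on a
compact convex metrizable subset `C` of a locally convex space lies in a closed face `F`
of `C`, then the measure is supported on `F`. -/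
theorem bauer_theorem
    {E : Type*} [AddCommGroup E] [Module ℝ E] [TopologicalSpace E]
    [IsTopologicalAddGroup E] [ContinuousSMul ℝ E] [LocallyConvexSpace ℝ E]
    [MeasurableSpace E] [BorelSpace E]
    (C : Set E) (hCcomp : IsCompact C) (hCconv : Convex ℝ C)
    (hCmetr : TopologicalSpace.MetrizableSpace C)
    (F : Set E) (hFC : F ⊆ C) (hFclosed : IsClosed F) (hFconv : Convex ℝ F)
    -- `F` is a face of `C`:
    (hface : ∀ c₁ ∈ C, ∀ c₂ ∈ C, ∀ t : ℝ, 0 < t → t < 1 →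
      t • c₁ + (1 - t) • c₂ ∈ F → c₁ ∈ F ∧ c₂ ∈ F)
    (ν : Measure E) [IsProbabilityMeasure ν] (hνC : ν Cᶜ = 0)
    -- `b` is the barycenter of `ν` and lies in `F`:
    (b : E) (hbF : b ∈ F)
    (hbar : ∀ f : E →L[ℝ] ℝ, f b = ∫ x, f x ∂ν) :
    ν (C \ F) = 0 := by
  classical
  by_contra hpos
  -- measurable full-measure subset of C
  obtain ⟨B, hBsup, hBmeas, hBnull⟩ := exists_measurable_superset_of_null hνC
  set C₀ : Set E := Bᶜ with hC₀
  have hC₀meas : MeasurableSet C₀ := hBmeas.compl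
  have hC₀sub : C₀ ⊆ C := fun x hx => by
    by_contra hxC; exact hx (hBsup hxC)
  have hC₀null : ν C₀ᶜ = 0 := by rwa [hC₀, compl_compl]
  -- metric structure on C
  letI : MetricSpace C := TopologicalSpace.metrizableSpaceMetric C
  haveI : CompactSpace C := isCompact_iff_compactSpace.1 hCcomp
  set F' : Set C := Subtype.val ⁻¹' F with hF'
  have hF'closed : IsClosed F' := hFclosed.preimage continuous_subtype_val
  have hF'ne : F'.Nonempty := ⟨⟨b, hFC hbF⟩, hbF⟩
  set K' : ℕ → Set C := fun n => {x | (1:ℝ)/(n+1) ≤ Metric.infDist x F'} with hK'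
  have hK'closed : ∀ n, IsClosed (K' n) :=
    fun n => isClosed_le continuous_const (Metric.continuous_infDist_pt F')
  have hK'comp : ∀ n, IsCompact (K' n) := fun n => (hK'closed n).isCompact
  -- closed sets A n in E cutting out K' n
  have hA : ∀ n, ∃ A : Set E, IsClosed A ∧ Subtype.val ⁻¹' A = K' n := by
    intro n
    obtain ⟨A, hAc, hApre⟩ := isClosed_induced_iff.1 (hK'closed n)
    exact ⟨A, hAc, hApre⟩
  choose A hAclosed hApre using hA
  have hKA : ∀ n, Subtype.val '' K' n = C ∩ A n := by
    intro n
    rw [← hApre n, Subtype.image_preimage_coe]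
  set L : ℕ → Set E := fun n => C₀ ∩ A n with hL
  have hLmeas : ∀ n, MeasurableSet (L n) := fun n => hC₀meas.inter (hAclosed n).measurableSet
  have hLK : ∀ n, L n ⊆ Subtype.val '' K' n := by
    intro n x hx
    rw [hKA n]; exact ⟨hC₀sub hx.1, hx.2⟩
  have hKC : ∀ n, Subtype.val '' K' n ⊆ C := by
    intro n x hx; rw [hKA n] at hx; exact hx.1
  have hKF : ∀ n, ∀ x ∈ Subtype.val '' K' n, x ∉ F := by
    rintro n x ⟨y, hy, rfl⟩ hxF
    have h0 : Metric.infDist y F' = 0 := by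
      rw [← Metric.infDist_zero_of_mem (show y ∈ F' from hxF)]
    have := hy
    rw [hK'] at this
    simp only [mem_setOf_eq] at this
    rw [h0] at this
    have : (0:ℝ) < 1/(n+1) := by positivity
    linarith [this, hy]
  -- covering
  have hcov : C \ F ⊆ C₀ᶜ ∪ ⋃ n, L n := by
    intro x hx
    by_cases hx0 : x ∈ C₀
    · right
      have hxF' : (⟨x, hx.1⟩ : C) ∉ F' := hx.2
      have hpos' : 0 < Metric.infDist (⟨x, hx.1⟩ : C) F' :=
        (hF'closed.notMem_iff_infDist_pos hF'ne).1 hxF'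
      obtain ⟨n, hn⟩ := exists_nat_one_div_lt hpos'
      refine mem_iUnion.2 ⟨n, hx0, ?_⟩
      have : (⟨x, hx.1⟩ : C) ∈ K' n := le_of_lt hn
      have := (hApre n) ▸ this
      exact this
    · exact Or.inl hx0
  have hUnion_pos : ν (⋃ n, L n) ≠ 0 := by
    intro h0
    apply hpos
    refine le_antisymm ?_ (zero_le)
    calc ν (C \ F) ≤ ν (C₀ᶜ ∪ ⋃ n, L n) := measure_mono hcov
    _ ≤ ν C₀ᶜ + ν (⋃ n, L n) := measure_union_le _ _
    _ = 0 := by rw [hC₀null, h0, add_zero]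
  obtain ⟨n, hLn⟩ : ∃ n, ν (L n) ≠ 0 := by
    by_contra hall
    push_neg at hall
    exact hUnion_pos (measure_iUnion_null hall)
  set Kn : Set E := Subtype.val '' K' n with hKn
  have hKncomp : IsCompact Kn := (hK'comp n).image continuous_subtype_val
  set Ln : Set E := L n with hLn'
  have hLnK : Ln ⊆ Kn := hLK n
  have hLnmeas : MeasurableSet Ln := hLmeas n
  set α : ENNReal := ν Ln with hα
  have hα0 : α ≠ 0 := hLn
  have hαfin : α ≠ ⊤ := (measure_lt_top ν Ln).ne
  have hα1 : α ≤ 1 := prob_le_one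
  -- move to the separation quotient
  set Q := SeparationQuotient E with hQ
  haveI : IsTopologicalAddGroup Q := .mk
  haveI : LocallyConvexSpace ℝ Q := my_locallyConvex_quotient
  letI : MeasurableSpace Q := borel Q
  haveI : BorelSpace Q := ⟨rfl⟩
  have hmkcont : Continuous (mk : E → Q) := continuous_mk
  have hmkmeas : Measurable (mk : E → Q) := hmkcont.measurable
  have hmklin : IsLinearMap ℝ (mk : E → Q) := ⟨fun _ _ => rfl, fun _ _ => rfl⟩
  -- saturation of F
  have hsatF : ∀ x y : E, (mk x : Q) = mk y → y ∈ F → x ∈ F := fun x y h hy =>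
    ((SeparationQuotient.mk_eq_mk.1 h).mem_closed_iff hFclosed).2 hy
  set C1 : Set Q := mk '' C with hC1
  set F1 : Set Q := mk '' F with hF1
  set K1 : Set Q := mk '' Kn with hK1
  have hC1comp : IsCompact C1 := hCcomp.image hmkcont
  have hC1conv : Convex ℝ C1 := hCconv.is_linear_image hmklin
  have hC1closed : IsClosed C1 := hC1comp.isClosed
  have hF1comp : IsCompact F1 := (hCcomp.of_isClosed_subset hFclosed hFC).image hmkcont
  have hF1closed : IsClosed F1 := hF1comp.isClosed
  have hK1comp : IsCompact K1 := hKncomp.image hmkcont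
  have hK1closed : IsClosed K1 := hK1comp.isClosed
  have hK1C1 : K1 ⊆ C1 := Set.image_mono (hKC n)
  have hK1F1 : ∀ x ∈ K1, x ∉ F1 := by
    rintro x ⟨y, hy, rfl⟩ ⟨z, hz, hzy⟩
    exact hKF n y hy (hsatF y z hzy.symm hz)
  set D : Set Q := closure (convexHull ℝ K1) with hD
  have hDsub : D ⊆ C1 := closure_minimal (convexHull_min hK1C1 hC1conv) hC1closed
  have hDcomp : IsCompact D := hC1comp.of_isClosed_subset isClosed_closure hDsub
  have hDconv : Convex ℝ D := (convex_convexHull ℝ K1).closure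
  have hDclosed : IsClosed D := isClosed_closure
  have hK1D : K1 ⊆ D := (subset_convexHull ℝ K1).trans subset_closure
  -- pushforward measures
  set ν₁ : Measure Q := (ν.restrict Ln).map mk with hν₁
  set ν₂ : Measure Q := (ν.restrict Lnᶜ).map mk with hν₂
  have hν₁tot : ν₁ univ = α := by
    rw [hν₁, Measure.map_apply hmkmeas MeasurableSet.univ]
    simp
    exact hα.symm
  have hν₂tot : ν₂ univ = 1 - α := by
    rw [hν₂, Measure.map_apply hmkmeas MeasurableSet.univ]
    simp only [preimage_univ, Measure.restrict_apply MeasurableSet.univ, univ_inter]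
    rw [measure_compl hLnmeas (measure_lt_top ν Ln).ne]
    simp
    rw [hα]
  have hν₁K1 : ν₁ K1ᶜ = 0 := by
    rw [hν₁, Measure.map_apply hmkmeas hK1closed.measurableSet.compl]
    rw [Measure.restrict_apply (hK1closed.measurableSet.compl.preimage hmkmeas)]
    have hemp : (mk ⁻¹' K1ᶜ) ∩ Ln = ∅ := by
      ext x
      simp only [mem_inter_iff, mem_preimage, mem_compl_iff, mem_empty_iff_false, iff_false,
        not_and]
      intro hnot hxL
      exact hnot (mem_image_of_mem _ (hLnK hxL))
    rw [hemp, measure_empty]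
  have hν₂C1 : ν₂ C1ᶜ = 0 := by
    rw [hν₂, Measure.map_apply hmkmeas hC1closed.measurableSet.compl]
    rw [Measure.restrict_apply (hC1closed.measurableSet.compl.preimage hmkmeas)]
    refine measure_mono_null ?_ hC₀null
    intro x hx
    intro hxC₀
    exact hx.1 (mem_image_of_mem _ (hC₀sub hxC₀))
  -- finiteness
  haveI : IsFiniteMeasure ν₁ := ⟨by rw [hν₁tot]; exact (hα1.trans_lt ENNReal.one_lt_top)⟩
  haveI : IsFiniteMeasure ν₂ := ⟨by
    rw [hν₂tot]; exact (tsub_le_self.trans_lt ENNReal.one_lt_top)⟩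
  -- integral decomposition
  have hint : ∀ f : Q →L[ℝ] ℝ,
      f (mk b) = ∫ y, f y ∂ν₁ + ∫ y, f y ∂ν₂ := by
    intro f
    have hg : (f.comp (SeparationQuotient.mkCLM ℝ E)) b = ∫ x, (f.comp (SeparationQuotient.mkCLM ℝ E)) x ∂ν := hbar _
    have hgc : Continuous fun x : E => f (mk x) := f.continuous.comp hmkcont
    have hgint : Integrable (fun x : E => f (mk x)) ν :=
      my_integrable ν hCcomp hνC hgc
    have hsplit : ∫ x, f (mk x) ∂ν
        = (∫ x in Ln, f (mk x) ∂ν) + ∫ x in Lnᶜ, f (mk x) ∂ν :=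
      (integral_add_compl hLnmeas hgint).symm
    have h1 : ∫ y, f y ∂ν₁ = ∫ x in Ln, f (mk x) ∂ν := by
      rw [hν₁, integral_map hmkmeas.aemeasurable f.continuous.aestronglyMeasurable]
    have h2 : ∫ y, f y ∂ν₂ = ∫ x in Lnᶜ, f (mk x) ∂ν := by
      rw [hν₂, integral_map hmkmeas.aemeasurable f.continuous.aestronglyMeasurable]
    have hfb : f (mk b) = ∫ x, f (mk x) ∂ν := hg
    rw [hfb, hsplit, h1, h2]
  -- normalized measure on K1
  set p₁ : Measure Q := α⁻¹ • ν₁ with hp₁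
  haveI hp₁prob : IsProbabilityMeasure p₁ := ⟨by
    rw [hp₁, Measure.smul_apply, hν₁tot, smul_eq_mul, ENNReal.inv_mul_cancel hα0 hαfin]⟩
  have hp₁K : p₁ K1ᶜ = 0 := by
    rw [hp₁, Measure.smul_apply, hν₁K1, smul_eq_mul, mul_zero]
  obtain ⟨b₁, hb₁D, hb₁bar⟩ :=
    exists_barycenter p₁ hK1comp hK1D hDcomp hDclosed hDconv hp₁K
  set a : ℝ := α.toReal with ha
  have ha0 : 0 < a := ENNReal.toReal_pos hα0 hαfin
  have hI1 : ∀ f : Q →L[ℝ] ℝ, ∫ y, f y ∂ν₁ = a * f b₁ := by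
    intro f
    have := hb₁bar f
    rw [hp₁, integral_smul_measure, ENNReal.toReal_inv, smul_eq_mul] at this
    rw [this, ← ha]
    field_simp
  have hb₁F1 : b₁ ∈ F1 := by
    rcases lt_or_eq_of_le hα1 with hαlt | hαeq
    · -- 0 < α < 1 : use the complementary barycenter
      have hβ0 : (1 : ENNReal) - α ≠ 0 := fun h => absurd (tsub_eq_zero_iff_le.1 h) (not_le.2 hαlt)
      have hβfin : (1 : ENNReal) - α ≠ ⊤ := (tsub_le_self.trans_lt ENNReal.one_lt_top).ne
      set p₂ : Measure Q := ((1 : ENNReal) - α)⁻¹ • ν₂ with hp₂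
      haveI hp₂prob : IsProbabilityMeasure p₂ := ⟨by
        rw [hp₂, Measure.smul_apply, hν₂tot, smul_eq_mul, ENNReal.inv_mul_cancel hβ0 hβfin]⟩
      have hp₂C : p₂ C1ᶜ = 0 := by
        rw [hp₂, Measure.smul_apply, hν₂C1, smul_eq_mul, mul_zero]
      obtain ⟨b₂, hb₂C, hb₂bar⟩ :=
        exists_barycenter p₂ hC1comp Subset.rfl hC1comp hC1closed hC1conv hp₂C
      have ha1 : a < 1 := by
        have := (ENNReal.toReal_lt_toReal hαfin ENNReal.one_ne_top).2 hαlt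
        simpa using this
      have h1a : ((1 : ENNReal) - α).toReal = 1 - a := by
        rw [ENNReal.toReal_sub_of_le hα1 ENNReal.one_ne_top]; simp
        exact ha.symm
      have hI2 : ∀ f : Q →L[ℝ] ℝ, ∫ y, f y ∂ν₂ = (1 - a) * f b₂ := by
        intro f
        have := hb₂bar f
        have hne : (1 : ℝ) - a ≠ 0 := by linarith
        rw [hp₂, integral_smul_measure, ENNReal.toReal_inv, smul_eq_mul, h1a] at this
        rw [this]
        field_simp
      have hcomb : (mk b : Q) = a • b₁ + (1 - a) • b₂ := by
        apply my_eq_of_forall_dual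
        intro f
        simp only [map_add, _root_.map_smul, smul_eq_mul]
        rw [hint f, hI1 f, hI2 f]
      obtain ⟨c₁, hc₁C, hmkc₁⟩ := hDsub hb₁D
      obtain ⟨c₂, hc₂C, hmkc₂⟩ := hb₂C
      have hmkcomb : (mk (a • c₁ + (1 - a) • c₂) : Q) = mk b := by
        have : (mk (a • c₁ + (1 - a) • c₂) : Q) = a • (mk c₁ : Q) + (1 - a) • (mk c₂ : Q) := rfl
        rw [this, hmkc₁, hmkc₂, ← hcomb]
      have hFm : a • c₁ + (1 - a) • c₂ ∈ F := hsatF _ b hmkcomb hbF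
      exact ⟨c₁, (hface c₁ hc₁C c₂ hc₂C a ha0 ha1 hFm).1, hmkc₁⟩
    · -- α = 1
      have hν₂zero : ν₂ = 0 := Measure.measure_univ_eq_zero.1 (by rw [hν₂tot, ← hαeq, tsub_self])
      have ha1 : a = 1 := by rw [ha, hαeq, ENNReal.toReal_one]
      have : b₁ = (mk b : Q) := by
        apply my_eq_of_forall_dual
        intro f
        have := hint f
        rw [hν₂zero] at this
        simp only [integral_zero_measure, add_zero] at this
        rw [this, hI1 f, ha1, one_mul]
      rw [this]
      exact ⟨b, hbF, rfl⟩
  -- extreme point argument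
  set G : Set Q := D ∩ F1 with hG
  have hGcomp : IsCompact G := hDcomp.inter_right hF1closed
  have hGne : G.Nonempty := ⟨b₁, hb₁D, hb₁F1⟩
  obtain ⟨e, he⟩ := hGcomp.extremePoints_nonempty hGne
  have heG := mem_extremePoints.1 he
  have heF1 : e ∈ F1 := heG.1.2
  have heD : e ∈ extremePoints ℝ D := by
    refine mem_extremePoints.2 ⟨heG.1.1, ?_⟩
    intro x hxD y hyD hseg
    have hseg' := hseg
    rw [openSegment_eq_image] at hseg'
    obtain ⟨θ, ⟨hθ0, hθ1⟩, heq0⟩ := hseg'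
    have heq : (1 - θ) • x + θ • y = e := heq0
    obtain ⟨cx, hcxC, hmkcx⟩ := hDsub hxD
    obtain ⟨cy, hcyC, hmkcy⟩ := hDsub hyD
    obtain ⟨w, hwF, hwmk⟩ := heF1
    have hmkcomb : (mk ((1 - θ) • cx + θ • cy) : Q) = mk w := by
      have h1 : (mk ((1 - θ) • cx + θ • cy) : Q)
          = (1 - θ) • (mk cx : Q) + θ • (mk cy : Q) := rfl
      rw [h1, hmkcx, hmkcy, heq, hwmk]
    have hFm : (1 - θ) • cx + θ • cy ∈ F := hsatF _ w hmkcomb hwF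
    have hFm' : (1 - θ) • cx + (1 - (1 - θ)) • cy ∈ F := by
      have : (1 : ℝ) - (1 - θ) = θ := by ring
      rw [this]; exact hFm
    obtain ⟨hcxF, hcyF⟩ :=
      hface cx hcxC cy hcyC (1 - θ) (by linarith) (by linarith) hFm'
    exact heG.2 x ⟨hxD, ⟨cx, hcxF, hmkcx⟩⟩ y ⟨hyD, ⟨cy, hcyF, hmkcy⟩⟩ hseg
  have hmil : e ∈ K1 := by
    rw [hD] at heD
    exact my_milman hK1comp (hD ▸ hDcomp) heD
  exact hK1F1 e hmil heF1
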